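/- Let ρ ∈ (0,1). Then for every natural number n ≥ 1, Φ(ρn+1) > −1/(ρ+1). -/
import Mathlib


open Real Filter Topology

/-- The digamma function `Φ(z) = Γ'(z)/Γ(z)`. -/
noncomputable def digamma (z : ℝ) : ℝ := deriv Real.Gamma z / Real.Gamma z

private lemma diffGamma {x : ℝ} (hx : 0 < x) : DifferentiableAt ℝ Real.Gamma x :=
  Real.differentiableAt_Gamma fun m ↦ ((neg_nonpos.mpr m.cast_nonneg).trans_lt hx).ne'

private lemma difflogGamma {x : ℝ} (hx : 0 < x) :
    DifferentiableAt ℝ (Real.log ∘ Real.Gamma) x :=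
  (diffGamma hx).log (Real.Gamma_pos_of_pos hx).ne'

private lemma digamma_eq {x : ℝ} (hx : 0 < x) :
    digamma x = deriv (Real.log ∘ Real.Gamma) x := by
  rw [digamma, Function.comp_def,
    deriv.log (diffGamma hx) (Real.Gamma_pos_of_pos hx).ne']

private lemma deriv_log_Gamma_rec {x : ℝ} (hx : 0 < x) :
    deriv (Real.log ∘ Real.Gamma) (x + 1) = deriv (Real.log ∘ Real.Gamma) x + 1 / x := by
  have h_rec : ∀ y : ℝ, 0 < y →
      (Real.log ∘ Real.Gamma) (y + 1) = (Real.log ∘ Real.Gamma) y + Real.log y := by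
    intro y hy
    simp only [Function.comp_apply, Real.Gamma_add_one hy.ne',
      Real.log_mul hy.ne' (Real.Gamma_pos_of_pos hy).ne', add_comm]
  rw [← deriv_comp_add_const, one_div, ← Real.deriv_log,
    ← deriv_add (difflogGamma hx) (Real.differentiableAt_log hx.ne')]
  apply Filter.EventuallyEq.deriv_eq
  filter_upwards [eventually_gt_nhds hx] using h_rec

private lemma digamma_mono : MonotoneOn (deriv (Real.log ∘ Real.Gamma)) (Set.Ioi 0) :=
  Real.convexOn_log_Gamma.monotoneOn_deriv fun _ hx ↦ difflogGamma hx

private lemma digamma_two : digamma 2 = 1 - Real.eulerMascheroniConstant := by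
  have h := Real.deriv_Gamma_nat 1
  rw [digamma]
  norm_num at h
  rw [h, Real.Gamma_two]
  ring

theorem digamma_lower_bound (ρ : ℝ) (hρ : ρ ∈ Set.Ioo (0:ℝ) 1) :
    ∀ n : ℕ, 1 ≤ n → digamma (ρ * n + 1) > -(1 / (ρ + 1)) := by
  obtain ⟨hρ0, hρ1⟩ := hρ
  intro n hn
  have hn1 : (1:ℝ) ≤ n := by exact_mod_cast hn
  have hx : (0:ℝ) < ρ * n + 1 := by nlinarith
  have hρ1' : (0:ℝ) < ρ + 1 := by linarith
  rw [digamma_eq hx]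
  have h1 : deriv (Real.log ∘ Real.Gamma) (ρ + 1) ≤ deriv (Real.log ∘ Real.Gamma) (ρ * n + 1) := by
    apply digamma_mono (by simp [hρ1'] : (ρ:ℝ) + 1 ∈ Set.Ioi (0:ℝ)) (Set.mem_Ioi.mpr hx)
    nlinarith
  have h2 : deriv (Real.log ∘ Real.Gamma) (ρ + 1 + 1)
      = deriv (Real.log ∘ Real.Gamma) (ρ + 1) + 1 / (ρ + 1) := deriv_log_Gamma_rec hρ1'
  have h3 : deriv (Real.log ∘ Real.Gamma) 2 ≤ deriv (Real.log ∘ Real.Gamma) (ρ + 1 + 1) := by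
    apply digamma_mono (by norm_num : (2:ℝ) ∈ Set.Ioi (0:ℝ))
      (Set.mem_Ioi.mpr (by linarith)) (by linarith)
  have h4 : deriv (Real.log ∘ Real.Gamma) 2 = 1 - Real.eulerMascheroniConstant := by
    rw [← digamma_eq (by norm_num : (0:ℝ) < 2), digamma_two]
  have hγ : Real.eulerMascheroniConstant < 2/3 := Real.eulerMascheroniConstant_lt_two_thirds
  linarith
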